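/- arXiv:1711.10387 — 2 statements merged into one kernel-verified Lean document; each statement's English description precedes it below -/
import Mathlib

section
/- Every compact subgroup K of the additive group ℚ_p is of the form K = p^l ℤ_p for some integer l, or K = {0}. -/
/-- Every compact subgroup `K` of the additive group `ℚ_[p]` is either trivial or of the
form `p^l ℤ_[p]` for some integer `l`. -/
theorem padic_compact_subgroup (p : ℕ) [Fact p.Prime] (K : AddSubgroup ℚ_[p])
    (hK : IsCompact (K : Set ℚ_[p])) :
    K = ⊥ ∨ ∃ l : ℤ, (K : Set ℚ_[p]) = {x : ℚ_[p] | ∃ c : ℤ_[p], x = (p : ℚ_[p]) ^ l * (c : ℚ_[p])} := by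
  by_cases hbot : K = ⊥
  · exact Or.inl hbot
  right
  have hpne : (p : ℚ_[p]) ≠ 0 := Nat.cast_ne_zero.mpr (Fact.out : p.Prime).ne_zero
  have hppos : (0 : ℝ) < p := by exact_mod_cast (Fact.out : p.Prime).pos
  -- a nonzero element exists
  obtain ⟨y, hyK, hyne⟩ : ∃ y ∈ K, y ≠ 0 := by
    by_contra h
    push_neg at h
    exact hbot ((AddSubgroup.eq_bot_iff_forall K).mpr h)
  -- element of maximal norm
  obtain ⟨x0, hx0K, hmax⟩ :=
    hK.exists_isMaxOn ⟨0, K.zero_mem⟩ continuous_norm.continuousOn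
  have hymax : ‖y‖ ≤ ‖x0‖ := hmax hyK
  have hx0ne : x0 ≠ 0 := by
    intro h
    rw [h, norm_zero] at hymax
    exact hyne (norm_le_zero_iff.mp hymax)
  set l : ℤ := x0.valuation with hl
  have hnx0 : ‖x0‖ = (p : ℝ) ^ (-l) := Padic.norm_eq_zpow_neg_valuation hx0ne
  refine ⟨l, ?_⟩
  -- the unit part of x0
  have hu_norm : ‖x0 * (p : ℚ_[p]) ^ (-l)‖ = 1 := by
    rw [norm_mul, Padic.norm_p_zpow, hnx0, neg_neg, ← zpow_add₀ (ne_of_gt hppos)]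
    simp
  set u0 : ℤ_[p] := ⟨x0 * (p : ℚ_[p]) ^ (-l), le_of_eq hu_norm⟩ with hu0
  have hu0norm : ‖u0‖ = 1 := hu_norm
  obtain ⟨v, hv⟩ : IsUnit u0 := PadicInt.isUnit_iff.mpr hu0norm
  have hx0eq : x0 = (p : ℚ_[p]) ^ l * (u0 : ℚ_[p]) := by
    show x0 = (p : ℚ_[p]) ^ l * (x0 * (p : ℚ_[p]) ^ (-l))
    rw [mul_comm x0, ← mul_assoc, ← zpow_add₀ hpne]
    simp
  -- the set of d with x0 * d ∈ K is closed and contains ℤ, hence everything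
  have hKclosed : IsClosed (K : Set ℚ_[p]) := hK.isClosed
  have hS : ∀ d : ℤ_[p], x0 * (d : ℚ_[p]) ∈ K := by
    have hclosed : IsClosed {d : ℤ_[p] | x0 * (d : ℚ_[p]) ∈ K} := by
      have hiso : Isometry (fun d : ℤ_[p] => (d : ℚ_[p])) := fun a b => rfl
      have hcont : Continuous fun d : ℤ_[p] => x0 * (d : ℚ_[p]) :=
        (continuous_mul_left x0).comp hiso.continuous
      exact hKclosed.preimage hcont
    have hsub : Set.range (Int.cast : ℤ → ℤ_[p]) ⊆ {d : ℤ_[p] | x0 * (d : ℚ_[p]) ∈ K} := by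
      rintro _ ⟨n, rfl⟩
      have : x0 * ((n : ℤ_[p]) : ℚ_[p]) = n • x0 := by
        push_cast
        rw [zsmul_eq_mul, mul_comm]
      rw [Set.mem_setOf_eq, this]
      exact K.zsmul_mem hx0K n
    have := closure_minimal hsub hclosed
    rw [PadicInt.denseRange_intCast.closure_range] at this
    exact fun d => this (Set.mem_univ d)
  ext x
  constructor
  · intro hx
    have hle : ‖x‖ ≤ (p : ℝ) ^ (-l) := hnx0 ▸ hmax hx
    have hc : ‖x * (p : ℚ_[p]) ^ (-l : ℤ)‖ ≤ 1 := by
      rw [norm_mul, Padic.norm_p_zpow, neg_neg]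
      calc ‖x‖ * (p : ℝ) ^ l ≤ (p : ℝ) ^ (-l) * (p : ℝ) ^ l :=
            mul_le_mul_of_nonneg_right hle (zpow_nonneg hppos.le l)
        _ = 1 := by rw [← zpow_add₀ (ne_of_gt hppos)]; simp
    refine ⟨⟨x * (p : ℚ_[p]) ^ (-l : ℤ), hc⟩, ?_⟩
    show x = (p : ℚ_[p]) ^ l * (x * (p : ℚ_[p]) ^ (-l))
    rw [mul_comm x, ← mul_assoc, ← zpow_add₀ hpne]
    simp
  · rintro ⟨c, rfl⟩
    have key : x0 * ((((v⁻¹ : ℤ_[p]ˣ) : ℤ_[p]) * c : ℤ_[p]) : ℚ_[p])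
        = (p : ℚ_[p]) ^ l * (c : ℚ_[p]) := by
      rw [hx0eq, mul_assoc, ← PadicInt.coe_mul, ← mul_assoc u0, ← hv, Units.mul_inv, one_mul]
    have := hS (((v⁻¹ : ℤ_[p]ˣ) : ℤ_[p]) * c)
    rwa [key] at this
end

section
/- Let Λ be the 3×3 matrix over ℤ_p with rows (1,1,1), (1,δ₁,δ₂), (1,ε₁,ε₂), where δ₁ is a unit of ℤ_p and δ₂, ε₁, ε₂ are non-units, and suppose det Λ is a unit of ℤ_p. If u, v, w ∈ ℤ(p^∞) (on which ℤ_p acts naturally) satisfy u + v + w ∈ ℤ(p), u + δ₁v + ε₁w = 0 and u + δ₂v + ε₂w = 0, then u = v = 0. -/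
/-- The Prüfer `p`-group `ℤ(p^∞)`, realized as `ℚ_p / ℤ_p` (a `ℤ_p`-module). -/
abbrev PruferGroup (p : ℕ) [Fact p.Prime] :=
  ℚ_[p] ⧸ LinearMap.range (Algebra.linearMap ℤ_[p] ℚ_[p])

/-- Let `Λ` have rows `(1,1,1), (1,δ₁,δ₂), (1,ε₁,ε₂)` over `ℤ_p` with `δ₁` a unit,
`δ₂, ε₁, ε₂` non-units, and `det Λ` a unit. If `u, v, w ∈ ℤ(p^∞)` satisfy
`u + v + w ∈ ℤ(p)`, `u + δ₁v + ε₁w = 0` and `u + δ₂v + ε₂w = 0`, then `u = v = 0`. -/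
theorem prufer_kernel_triviality (p : ℕ) [Fact p.Prime]
    (δ₁ δ₂ ε₁ ε₂ : ℤ_[p])
    (hδ₁ : IsUnit δ₁) (hδ₂ : ¬IsUnit δ₂) (hε₁ : ¬IsUnit ε₁) (hε₂ : ¬IsUnit ε₂)
    (hdet : IsUnit (δ₁ * ε₂ - δ₂ * ε₁ - δ₁ + δ₂ + ε₁ - ε₂))
    (u v w : PruferGroup p)
    (h1 : (p : ℤ_[p]) • (u + v + w) = 0)
    (h2 : u + δ₁ • v + ε₁ • w = 0)
    (h3 : u + δ₂ • v + ε₂ • w = 0) :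
    u = 0 ∧ v = 0 := by
  obtain ⟨d₂, hd₂⟩ : (p : ℤ_[p]) ∣ δ₂ := (PadicInt.norm_lt_one_iff_dvd _).1
    (PadicInt.not_isUnit_iff.1 hδ₂)
  obtain ⟨e₁, he₁⟩ : (p : ℤ_[p]) ∣ ε₁ := (PadicInt.norm_lt_one_iff_dvd _).1
    (PadicInt.not_isUnit_iff.1 hε₁)
  obtain ⟨e₂, he₂⟩ : (p : ℤ_[p]) ∣ ε₂ := (PadicInt.norm_lt_one_iff_dvd _).1
    (PadicInt.not_isUnit_iff.1 hε₂)
  obtain ⟨x, rfl⟩ := Submodule.Quotient.mk_surjective _ u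
  obtain ⟨y, rfl⟩ := Submodule.Quotient.mk_surjective _ v
  obtain ⟨z, rfl⟩ := Submodule.Quotient.mk_surjective _ w
  have hp : (p : ℚ_[p]) ≠ 0 := Nat.cast_ne_zero.2 (Fact.out : p.Prime).ne_zero
  have hD : ((δ₁ * ε₂ - δ₂ * ε₁ - δ₁ + δ₂ + ε₁ - ε₂ : ℤ_[p]) : ℚ_[p]) ≠ 0 := by
    exact PadicInt.coe_ne_zero.2 hdet.ne_zero
  have hunit1 : (δ₁ * ε₂ - δ₂ * ε₁ - δ₁ + δ₂ + ε₁ - ε₂) * ↑hdet.unit⁻¹ = 1 :=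
    hdet.mul_val_inv
  -- turn the quotient hypotheses into statements about lifts
  have mk_eq : ∀ q : ℚ_[p],
      (Submodule.Quotient.mk q : PruferGroup p) = 0 ↔ ∃ t : ℤ_[p], (t : ℚ_[p]) = q := by
    intro q
    rw [Submodule.Quotient.mk_eq_zero]
    exact ⟨fun ⟨t, ht⟩ => ⟨t, ht⟩, fun ⟨t, ht⟩ => ⟨t, ht⟩⟩
  have smul_mk : ∀ (c : ℤ_[p]) (q : ℚ_[p]),
      c • (Submodule.Quotient.mk q : PruferGroup p) = Submodule.Quotient.mk (c • q) := fun c q =>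
    (Submodule.Quotient.mk_smul _ c q).symm
  rw [← Submodule.Quotient.mk_add, ← Submodule.Quotient.mk_add, smul_mk, mk_eq] at h1
  rw [smul_mk, smul_mk, ← Submodule.Quotient.mk_add, ← Submodule.Quotient.mk_add, mk_eq] at h2
  rw [smul_mk, smul_mk, ← Submodule.Quotient.mk_add, ← Submodule.Quotient.mk_add, mk_eq] at h3
  obtain ⟨a, ha⟩ := h1
  obtain ⟨b, hb⟩ := h2
  obtain ⟨c, hc⟩ := h3
  simp only [Algebra.smul_def, PadicInt.algebraMap_apply] at ha hb hc
  have hd₂' : (δ₂ : ℚ_[p]) = p * d₂ := by exact_mod_cast congrArg _ hd₂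
  have he₁' : (ε₁ : ℚ_[p]) = p * e₁ := by exact_mod_cast congrArg _ he₁
  have he₂' : (ε₂ : ℚ_[p]) = p * e₂ := by exact_mod_cast congrArg _ he₂
  rw [hd₂', he₂'] at hc
  rw [he₁'] at hb
  rw [PadicInt.coe_natCast] at ha
  constructor
  · rw [mk_eq]
    refine ⟨↑hdet.unit⁻¹ * (a * (δ₁ * e₂ - d₂ * ε₁) - b * (ε₂ - δ₂) + c * (ε₁ - δ₁)), ?_⟩
    have key : ((δ₁ * ε₂ - δ₂ * ε₁ - δ₁ + δ₂ + ε₁ - ε₂ : ℤ_[p]) : ℚ_[p]) * x =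
        ((a * (δ₁ * e₂ - d₂ * ε₁) - b * (ε₂ - δ₂) + c * (ε₁ - δ₁) : ℤ_[p]) : ℚ_[p]) := by
      apply mul_left_cancel₀ hp
      push_cast
      rw [hd₂', he₁', he₂']
      linear_combination (-(p : ℚ_[p]) * ((δ₁ : ℚ_[p]) * e₂ - p * d₂ * e₁)) * ha +
        ((p : ℚ_[p]) ^ 2 * ((e₂ : ℚ_[p]) - d₂)) * hb +
        (-(p : ℚ_[p]) * ((p : ℚ_[p]) * e₁ - δ₁)) * hc
    apply mul_left_cancel₀ hD
    rw [key, ← PadicInt.coe_mul, ← mul_assoc, hunit1, one_mul]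
  · rw [mk_eq]
    refine ⟨↑hdet.unit⁻¹ * (-a * (e₂ - e₁) + b * (ε₂ - 1) - c * (ε₁ - 1)), ?_⟩
    have key : ((δ₁ * ε₂ - δ₂ * ε₁ - δ₁ + δ₂ + ε₁ - ε₂ : ℤ_[p]) : ℚ_[p]) * y =
        ((-a * (e₂ - e₁) + b * (ε₂ - 1) - c * (ε₁ - 1) : ℤ_[p]) : ℚ_[p]) := by
      apply mul_left_cancel₀ hp
      push_cast
      rw [hd₂', he₁', he₂']
      linear_combination ((p : ℚ_[p]) * ((e₂ : ℚ_[p]) - e₁)) * ha +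
        (-(p : ℚ_[p]) * ((p : ℚ_[p]) * e₂ - 1)) * hb +
        ((p : ℚ_[p]) * ((p : ℚ_[p]) * e₁ - 1)) * hc
    apply mul_left_cancel₀ hD
    rw [key, ← PadicInt.coe_mul, ← mul_assoc, hunit1, one_mul]
end
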